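/- Let 𝓜 be a compact convex set of real symmetric m×m matrices such that for every M ∈ 𝓜, its positive part M₊ (from the decomposition M = M₊ − M₋ with M₊, M₋ positive semidefinite and ⟨M₊, M₋⟩ = 0) also belongs to 𝓜. Then: (i) Ω_𝓜(X) = sup_{M ∈ 𝓜} trace(X M Xᵀ) is convex on ℝ^{n×m}; and (ii) for every positive semidefinite G, if P ∈ 𝓜 satisfies ⟨G − P, Q − P⟩ ≤ 0 for all Q ∈ 𝓜 (i.e., P is the projection of G onto 𝓜), then P is positive semidefinite. -/

import Mathlib

open Matrix

namespace VGFAux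

variable {k n m : ℕ}

lemma trace_nonneg_of_psd {A : Matrix (Fin k) (Fin k) ℝ} (hA : A.PosSemidef) :
    0 ≤ A.trace := by
  obtain ⟨B, rfl⟩ : ∃ B : Matrix (Fin k) (Fin k) ℝ, A = Bᴴ * B := by
    open scoped MatrixOrder in
    obtain ⟨B, rfl⟩ := CStarAlgebra.nonneg_iff_eq_star_mul_self.mp hA.nonneg
    exact ⟨B, rfl⟩
  rw [Matrix.trace]
  refine Finset.sum_nonneg fun i _ => ?_
  simp only [Matrix.diag_apply, Matrix.mul_apply, Matrix.conjTranspose_apply, star_trivial]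
  exact Finset.sum_nonneg fun j _ => mul_self_nonneg _

lemma trace_quad_nonneg {Mp : Matrix (Fin m) (Fin m) ℝ} (hMp : Mp.PosSemidef)
    (X : Matrix (Fin n) (Fin m) ℝ) : 0 ≤ (X * Mp * Xᵀ).trace := by
  have h : (X * Mp * Xᵀ).PosSemidef := by
    have := hMp.mul_mul_conjTranspose_same X
    rwa [conjTranspose_eq_transpose_of_trivial] at this
  exact trace_nonneg_of_psd h

lemma trace_psd_mul_nonneg {A B : Matrix (Fin k) (Fin k) ℝ}
    (hA : A.PosSemidef) (hB : B.PosSemidef) : 0 ≤ (A * B).trace := by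
  obtain ⟨C, rfl⟩ : ∃ C : Matrix (Fin k) (Fin k) ℝ, A = Cᴴ * C := by
    open scoped MatrixOrder in
    obtain ⟨C, rfl⟩ := CStarAlgebra.nonneg_iff_eq_star_mul_self.mp hA.nonneg
    exact ⟨C, rfl⟩
  rw [Matrix.mul_assoc, Matrix.trace_mul_comm]
  exact trace_nonneg_of_psd (hB.mul_mul_conjTranspose_same C)

lemma trace_transpose_mul_self_nonneg (A : Matrix (Fin k) (Fin k) ℝ) :
    0 ≤ (Aᵀ * A).trace := by
  rw [Matrix.trace]
  refine Finset.sum_nonneg fun j _ => ?_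
  simp only [Matrix.diag_apply, Matrix.mul_apply, Matrix.transpose_apply]
  exact Finset.sum_nonneg fun i _ => mul_self_nonneg _

lemma eq_zero_of_trace_transpose_mul_self {A : Matrix (Fin k) (Fin k) ℝ}
    (h : (Aᵀ * A).trace = 0) : A = 0 := by
  have hexp : (Aᵀ * A).trace = ∑ j, ∑ i, A i j * A i j := by
    simp [Matrix.trace, Matrix.diag, Matrix.mul_apply, Matrix.transpose_apply]
  rw [hexp] at h
  ext i j
  have h1 := (Finset.sum_eq_zero_iff_of_nonneg (fun j _ =>
    Finset.sum_nonneg fun i _ => mul_self_nonneg (A i j))).mp h j (Finset.mem_univ j)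
  have h2 := (Finset.sum_eq_zero_iff_of_nonneg (fun i _ => mul_self_nonneg (A i j))).mp
    h1 i (Finset.mem_univ i)
  simpa using mul_self_eq_zero.mp h2

lemma exists_pos_parts {M : Matrix (Fin k) (Fin k) ℝ} (hM : M.IsSymm) :
    ∃ Mp Mm : Matrix (Fin k) (Fin k) ℝ, Mp.PosSemidef ∧ Mm.PosSemidef ∧ M = Mp - Mm ∧
      (Mpᵀ * Mm).trace = 0 := by
  have hH : M.IsHermitian := by
    rwa [Matrix.IsHermitian, conjTranspose_eq_transpose_of_trivial]
  set U : Matrix (Fin k) (Fin k) ℝ := (hH.eigenvectorUnitary : Matrix (Fin k) (Fin k) ℝ) with hU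
  set d : Fin k → ℝ := hH.eigenvalues with hd
  have hUU : star U * U = 1 := Matrix.mem_unitaryGroup_iff'.mp hH.eigenvectorUnitary.2
  refine ⟨U * Matrix.diagonal (fun i => max (d i) 0) * star U,
          U * Matrix.diagonal (fun i => max (-(d i)) 0) * star U, ?_, ?_, ?_, ?_⟩
  · have := (Matrix.posSemidef_diagonal_iff.mpr fun i => le_max_right (d i) 0
      ).mul_mul_conjTranspose_same U
    rwa [Matrix.star_eq_conjTranspose]
  · have := (Matrix.posSemidef_diagonal_iff.mpr fun i => le_max_right (-(d i)) 0
      ).mul_mul_conjTranspose_same U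
    rwa [Matrix.star_eq_conjTranspose]
  · have hspec := hH.spectral_theorem
    rw [RCLike.ofReal_real_eq_id] at hspec
    calc M = U * Matrix.diagonal d * star U := by simpa using hspec
    _ = _ := by
        have hfun : (fun i => max (d i) 0 - max (-(d i)) 0) = d := by
          funext i
          rcases le_total 0 (d i) with h | h
          · rw [max_eq_left h, max_eq_right (neg_nonpos.mpr h), sub_zero]
          · rw [max_eq_right h, max_eq_left (neg_nonneg.mpr h), zero_sub, neg_neg]
        rw [← Matrix.sub_mul, ← Matrix.mul_sub, Matrix.diagonal_sub, hfun]
  · have hDD : Matrix.diagonal (fun i => max (d i) 0) *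
        Matrix.diagonal (fun i => max (-(d i)) 0) = 0 := by
      rw [Matrix.diagonal_mul_diagonal]
      have : (fun i => max (d i) 0 * max (-(d i)) 0) = fun _ => (0:ℝ) := by
        funext i
        rcases le_total 0 (d i) with h | h
        · rw [max_eq_right (neg_nonpos.mpr h), mul_zero]
        · rw [max_eq_right h, zero_mul]
      rw [this, Matrix.diagonal_zero]
    have htp : (U * Matrix.diagonal (fun i => max (d i) 0) * star U)ᵀ
        = U * Matrix.diagonal (fun i => max (d i) 0) * star U := by
      rw [Matrix.star_eq_conjTranspose, conjTranspose_eq_transpose_of_trivial,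
        Matrix.transpose_mul, Matrix.transpose_mul, Matrix.transpose_transpose,
        Matrix.diagonal_transpose, Matrix.mul_assoc]
    rw [htp]
    simp only [Matrix.mul_assoc]
    rw [← Matrix.mul_assoc (star U) U, hUU, Matrix.one_mul,
      ← Matrix.mul_assoc (Matrix.diagonal _) (Matrix.diagonal _), hDD]
    simp

lemma trace_symm {Mp : Matrix (Fin m) (Fin m) ℝ} (hMp : Mp.IsSymm)
    (A B : Matrix (Fin n) (Fin m) ℝ) :
    (A * Mp * Bᵀ).trace = (B * Mp * Aᵀ).trace := by
  rw [← Matrix.trace_transpose (A * Mp * Bᵀ), Matrix.transpose_mul, Matrix.transpose_mul,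
    Matrix.transpose_transpose, hMp.eq, ← Matrix.mul_assoc]

lemma quad_ineq {Mp : Matrix (Fin m) (Fin m) ℝ} (hMp : Mp.PosSemidef)
    (X Y : Matrix (Fin n) (Fin m) ℝ) {a b : ℝ} (ha : 0 ≤ a) (hb : 0 ≤ b) (hab : a + b = 1) :
    ((a • X + b • Y) * Mp * (a • X + b • Y)ᵀ).trace
      ≤ a * (X * Mp * Xᵀ).trace + b * (Y * Mp * Yᵀ).trace := by
  have hsymm : Mp.IsSymm := by
    rw [Matrix.IsSymm, ← conjTranspose_eq_transpose_of_trivial]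
    exact hMp.isHermitian.eq
  have hr : (X * Mp * Yᵀ).trace = (Y * Mp * Xᵀ).trace := trace_symm hsymm X Y
  have hexp : ((a • X + b • Y) * Mp * (a • X + b • Y)ᵀ).trace
      = a*a*(X*Mp*Xᵀ).trace + a*b*(X*Mp*Yᵀ).trace + b*a*(Y*Mp*Xᵀ).trace
        + b*b*(Y*Mp*Yᵀ).trace := by
    simp only [Matrix.transpose_add, Matrix.transpose_smul, Matrix.add_mul, Matrix.mul_add,
      Matrix.smul_mul, Matrix.mul_smul, Matrix.trace_add, Matrix.trace_smul, smul_eq_mul]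
    ring
  have hW : ((X - Y) * Mp * (X - Y)ᵀ).trace
      = (X*Mp*Xᵀ).trace - (X*Mp*Yᵀ).trace - (Y*Mp*Xᵀ).trace + (Y*Mp*Yᵀ).trace := by
    simp only [Matrix.transpose_sub, Matrix.sub_mul, Matrix.mul_sub, Matrix.trace_sub]
    ring
  have hWnn := trace_quad_nonneg hMp (X - Y)
  rw [hW, hr] at hWnn
  rw [hexp, hr]
  have key := mul_nonneg (mul_nonneg ha hb) hWnn
  have hb1 : b = 1 - a := by linarith
  subst hb1
  nlinarith [key]

end VGFAux

open VGFAux in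
/-- If a compact convex set `𝓜` of symmetric matrices contains the positive part of
each of its elements, then (i) the VGF `Ω_𝓜` is convex, and (ii) the projection onto
`𝓜` of any positive semidefinite matrix is positive semidefinite. -/
theorem vgf_convex_and_proj_psd {n m : ℕ}
    (𝓜 : Set (Matrix (Fin m) (Fin m) ℝ))
    (hcpt : IsCompact 𝓜) (hconvS : Convex ℝ 𝓜) (hsym : ∀ M ∈ 𝓜, M.IsSymm)
    (hplus : ∀ M ∈ 𝓜, ∀ Mp Mm : Matrix (Fin m) (Fin m) ℝ,
      Mp.PosSemidef → Mm.PosSemidef → M = Mp - Mm → (Mpᵀ * Mm).trace = 0 →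
      Mp ∈ 𝓜) :
    ConvexOn ℝ Set.univ
      (fun X : Matrix (Fin n) (Fin m) ℝ => ⨆ M ∈ 𝓜, (X * M * Xᵀ).trace) ∧
    ∀ G : Matrix (Fin m) (Fin m) ℝ, G.PosSemidef →
      ∀ P ∈ 𝓜, (∀ Q ∈ 𝓜, ((G - P)ᵀ * (Q - P)).trace ≤ 0) → P.PosSemidef := by
  classical
  constructor
  · -- convexity of the VGF
    rcases Set.eq_empty_or_nonempty 𝓜 with hE | hNE
    · subst hE
      have hzero : (fun X : Matrix (Fin n) (Fin m) ℝ =>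
          ⨆ M ∈ (∅ : Set (Matrix (Fin m) (Fin m) ℝ)), (X * M * Xᵀ).trace)
          = fun _ => (0:ℝ) := by
        funext X
        simp
      rw [hzero]
      exact convexOn_const 0 convex_univ
    · obtain ⟨M₀, hM₀⟩ := hNE
      obtain ⟨Mp₀, Mm₀, h1, h2, h3, h4⟩ := exists_pos_parts (hsym M₀ hM₀)
      have hMp₀ : Mp₀ ∈ 𝓜 := hplus M₀ hM₀ _ _ h1 h2 h3 h4
      have hbdd : ∀ X : Matrix (Fin n) (Fin m) ℝ,
          BddAbove (Set.range fun M => ⨆ (_ : M ∈ 𝓜), (X * M * Xᵀ).trace) := by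
        intro X
        have hc : Continuous fun M : Matrix (Fin m) (Fin m) ℝ => (X * M * Xᵀ).trace :=
          ((continuous_const.matrix_mul continuous_id).matrix_mul continuous_const).matrix_trace
        obtain ⟨C, hC⟩ := (hcpt.image hc).bddAbove
        refine ⟨max C 0, ?_⟩
        rintro _ ⟨M, rfl⟩
        refine Real.iSup_le (fun h => ?_) (le_max_right C 0)
        exact le_trans (hC (Set.mem_image_of_mem _ h)) (le_max_left C 0)
      have hle : ∀ (X : Matrix (Fin n) (Fin m) ℝ) (M) (_ : M ∈ 𝓜),
          (X * M * Xᵀ).trace ≤ ⨆ M ∈ 𝓜, (X * M * Xᵀ).trace := by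
        intro X M hM
        have heq : (⨆ (_ : M ∈ 𝓜), (X * M * Xᵀ).trace) = (X * M * Xᵀ).trace := by
          haveI : Nonempty (M ∈ 𝓜) := ⟨hM⟩
          exact ciSup_const
        exact heq.symm.le.trans (le_ciSup (hbdd X) M)
      have hf0 : ∀ X : Matrix (Fin n) (Fin m) ℝ,
          0 ≤ ⨆ M ∈ 𝓜, (X * M * Xᵀ).trace :=
        fun X => le_trans (trace_quad_nonneg h1 X) (hle X Mp₀ hMp₀)
      refine ⟨convex_univ, fun X _ Y _ a b ha hb hab => ?_⟩
      simp only [smul_eq_mul]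
      have hRHS : 0 ≤ a * (⨆ M ∈ 𝓜, (X * M * Xᵀ).trace)
          + b * (⨆ M ∈ 𝓜, (Y * M * Yᵀ).trace) :=
        add_nonneg (mul_nonneg ha (hf0 X)) (mul_nonneg hb (hf0 Y))
      refine Real.iSup_le (fun M => ?_) hRHS
      refine Real.iSup_le (fun hM => ?_) hRHS
      obtain ⟨Mp, Mm, hp, hm, hdec, hor⟩ := exists_pos_parts (hsym M hM)
      have hMpM : Mp ∈ 𝓜 := hplus M hM Mp Mm hp hm hdec hor
      have step1 : ((a • X + b • Y) * M * (a • X + b • Y)ᵀ).trace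
          ≤ ((a • X + b • Y) * Mp * (a • X + b • Y)ᵀ).trace := by
        set Z := a • X + b • Y with hZ
        have hsplit : Z * M * Zᵀ = Z * Mp * Zᵀ - Z * Mm * Zᵀ := by
          rw [hdec, Matrix.mul_sub, Matrix.sub_mul]
        rw [hsplit, Matrix.trace_sub]
        linarith [trace_quad_nonneg hm Z]
      have step2 := quad_ineq hp X Y ha hb hab
      have step3 : a * (X * Mp * Xᵀ).trace + b * (Y * Mp * Yᵀ).trace
          ≤ a * (⨆ M ∈ 𝓜, (X * M * Xᵀ).trace) + b * (⨆ M ∈ 𝓜, (Y * M * Yᵀ).trace) :=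
        add_le_add (mul_le_mul_of_nonneg_left (hle X Mp hMpM) ha)
          (mul_le_mul_of_nonneg_left (hle Y Mp hMpM) hb)
      linarith
  · -- projection of a PSD matrix is PSD
    intro G hG P hP hVI
    obtain ⟨Pp, Pm, hPp, hPm, hdec, hor⟩ := exists_pos_parts (hsym P hP)
    have hPpM : Pp ∈ 𝓜 := hplus P hP Pp Pm hPp hPm hdec hor
    have h1 := hVI Pp hPpM
    have hPpP : Pp - P = Pm := by rw [hdec, sub_sub_cancel]
    rw [hPpP] at h1
    have hGt : Gᵀ = G := by
      rw [← conjTranspose_eq_transpose_of_trivial]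
      exact hG.isHermitian.eq
    have expand : ((G - P)ᵀ * Pm).trace
        = (G * Pm).trace - (Ppᵀ * Pm).trace + (Pmᵀ * Pm).trace := by
      rw [hdec]
      simp only [Matrix.transpose_sub, Matrix.sub_mul, Matrix.trace_sub, hGt]
      ring
    rw [expand, hor] at h1
    have h2 : 0 ≤ (G * Pm).trace := trace_psd_mul_nonneg hG hPm
    have h3 : 0 ≤ (Pmᵀ * Pm).trace := trace_transpose_mul_self_nonneg Pm
    have hz : (Pmᵀ * Pm).trace = 0 := le_antisymm (by linarith) h3
    have hPm0 : Pm = 0 := eq_zero_of_trace_transpose_mul_self hz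
    rw [hdec, hPm0, sub_zero]
    exact hPp
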